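/- If S is nearly epsilon-strongly G-graded, then every ideal I of S_e is ε-invariant, i.e., S_x S_{x^{-1}} I = I S_x S_{x^{-1}} for every x ∈ G. -/

import Mathlib

open Pointwise

/-- The product `UV` of two subsets of a ring: the additive subgroup consisting of all
finite sums of products `u * v` with `u ∈ U`, `v ∈ V`. -/
def setProd {S : Type*} [NonUnitalRing S] (U V : Set S) : AddSubgroup S :=
  AddSubgroup.closure (U * V)

/-- `I` is a (two-sided) ideal of the subring `T` of `S`. -/
def IsIdealOfComponent {S : Type*} [NonUnitalRing S] (T : AddSubgroup S)
    (I : AddSubgroup S) : Prop :=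
  I ≤ T ∧ ∀ a ∈ T, ∀ b ∈ I, a * b ∈ I ∧ b * a ∈ I

/-- If `S` is nearly epsilon-strongly `G`-graded, then every ideal `I` of the principal
component `S_e` is `ε`-invariant, i.e. `S_x S_{x⁻¹} I = I S_x S_{x⁻¹}` for every `x ∈ G`. -/
theorem ideal_epsilon_invariant {G : Type*} [Group G] [DecidableEq G]
    {S : Type*} [NonUnitalRing S] (𝒮 : G → AddSubgroup S)
    [DirectSum.Decomposition 𝒮]
    (hmul : ∀ {x y : G} {a b : S}, a ∈ 𝒮 x → b ∈ 𝒮 y → a * b ∈ 𝒮 (x * y))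
    (hnes : ∀ x : G, ∀ s ∈ 𝒮 x,
      (∃ ε ∈ setProd (𝒮 x : Set S) (𝒮 x⁻¹ : Set S), ε * s = s) ∧
      (∃ ε' ∈ setProd (𝒮 x⁻¹ : Set S) (𝒮 x : Set S), s * ε' = s))
    (I : AddSubgroup S) (hI : IsIdealOfComponent (𝒮 (1 : G)) I) :
    ∀ x : G, setProd ((setProd (𝒮 x : Set S) (𝒮 x⁻¹ : Set S) : AddSubgroup S) : Set S)
        (I : Set S) =
      setProd (I : Set S)
        ((setProd (𝒮 x : Set S) (𝒮 x⁻¹ : Set S) : AddSubgroup S) : Set S) := by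
  intro x
  set E : AddSubgroup S := setProd (𝒮 x : Set S) (𝒮 x⁻¹ : Set S) with hE
  apply le_antisymm
  · refine (AddSubgroup.closure_le _).mpr ?_
    rintro t ⟨u, hu, i, hi, rfl⟩
    induction hu using AddSubgroup.closure_induction with
    | mem u hu =>
      obtain ⟨p, hp, q, hq, rfl⟩ := hu
      have hqi : q * i ∈ 𝒮 x⁻¹ := by
        have := hmul hq (hI.1 hi)
        simpa using this
      obtain ⟨ε', hε', heq⟩ := (hnes x⁻¹ (q * i) hqi).2
      rw [inv_inv] at hε'
      have hpq : p * q ∈ 𝒮 (1 : G) := by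
        have := hmul hp hq
        simpa using this
      have hj : p * q * i ∈ I := (hI.2 _ hpq i hi).1
      have key : p * q * i = p * q * i * ε' := by
        simp only [mul_assoc] at heq ⊢
        rw [heq]
      show p * q * i ∈ (setProd (I : Set S) (E : Set S) : Set S)
      rw [key]
      exact AddSubgroup.subset_closure (Set.mul_mem_mul hj hε')
    | zero =>
      show (0 : S) * i ∈ (setProd (I : Set S) (E : Set S) : Set S)
      rw [zero_mul]
      exact (setProd (I : Set S) (E : Set S)).zero_mem
    | add a b _ _ ha hb =>
      show (a + b) * i ∈ (setProd (I : Set S) (E : Set S) : Set S)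
      rw [add_mul]
      exact (setProd (I : Set S) (E : Set S)).add_mem ha hb
    | neg a _ ha =>
      show (-a) * i ∈ (setProd (I : Set S) (E : Set S) : Set S)
      rw [neg_mul]
      exact (setProd (I : Set S) (E : Set S)).neg_mem ha
  · refine (AddSubgroup.closure_le _).mpr ?_
    rintro t ⟨i, hi, u, hu, rfl⟩
    induction hu using AddSubgroup.closure_induction with
    | mem u hu =>
      obtain ⟨p, hp, q, hq, rfl⟩ := hu
      have hip : i * p ∈ 𝒮 x := by
        have := hmul (hI.1 hi) hp
        simpa using this
      obtain ⟨ε, hε, heq⟩ := (hnes x (i * p) hip).1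
      have hpq : p * q ∈ 𝒮 (1 : G) := by
        have := hmul hp hq
        simpa using this
      have hj : i * (p * q) ∈ I := (hI.2 _ hpq i hi).2
      have hj' : (i * p) * q ∈ I := by rwa [mul_assoc]
      have key : i * (p * q) = ε * (i * p * q) := by
        calc i * (p * q) = i * p * q := (mul_assoc i p q).symm
        _ = ε * (i * p) * q := by rw [heq]
        _ = ε * (i * p * q) := mul_assoc ε (i * p) q
      show i * (p * q) ∈ (setProd (E : Set S) (I : Set S) : Set S)
      rw [key]
      exact AddSubgroup.subset_closure (Set.mul_mem_mul hε hj')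
    | zero =>
      show i * (0 : S) ∈ (setProd (E : Set S) (I : Set S) : Set S)
      rw [mul_zero]
      exact (setProd (E : Set S) (I : Set S)).zero_mem
    | add a b _ _ ha hb =>
      show i * (a + b) ∈ (setProd (E : Set S) (I : Set S) : Set S)
      rw [mul_add]
      exact (setProd (E : Set S) (I : Set S)).add_mem ha hb
    | neg a _ ha =>
      show i * (-a) ∈ (setProd (E : Set S) (I : Set S) : Set S)
      rw [mul_neg]
      exact (setProd (E : Set S) (I : Set S)).neg_mem ha
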